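/- Let f : 𝕋 → GLₙ(ℂ) admit a canonical factorization f = f₋ f₊. Define fᵉ : 𝔻² → GLₙ(ℂ) by fᵉ(z) = f₋ᵉ(z̄⁻¹) · f₊ᵉ(z) for z ≠ 0 and fᵉ(0) = f₋ᵉ(∞) · f₊ᵉ(0), where f₊ᵉ, f₋ᵉ are the analytic extensions. Then fᵉ is a well-defined continuous extension of f to the closed unit disk, taking values in invertible matrices, and is independent of the choice of canonical factorization. -/

import Mathlib

open Metric

open Complex Matrix Asymptotics


lemma conj_mem_closedBall {z : ℂ} (h : z ∈ closedBall (0:ℂ) 1) :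
    (starRingEnd ℂ) z ∈ closedBall (0:ℂ) 1 := by
  simpa [mem_closedBall_zero_iff] using mem_closedBall_zero_iff.mp h

lemma conj_mem_ball {z : ℂ} (h : z ∈ ball (0:ℂ) 1) :
    (starRingEnd ℂ) z ∈ ball (0:ℂ) 1 := by
  simpa [mem_ball_zero_iff] using mem_ball_zero_iff.mp h

lemma conj_mem_sphere {z : ℂ} (h : z ∈ sphere (0:ℂ) 1) :
    (starRingEnd ℂ) z ∈ sphere (0:ℂ) 1 := by
  simpa [mem_sphere_zero_iff_norm] using mem_sphere_zero_iff_norm.mp h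

lemma det_entry_diffOn {n : ℕ} {F : ℂ → Matrix (Fin n) (Fin n) ℂ} {s : Set ℂ}
    (hF : ∀ i j, DifferentiableOn ℂ (fun z => F z i j) s) :
    DifferentiableOn ℂ (fun z => (F z).det) s := by
  simp only [Matrix.det_apply']
  exact DifferentiableOn.fun_sum fun σ _ =>
    (DifferentiableOn.fun_finset_prod (fun i _ => hF (σ i) i)).const_mul _

lemma adjugate_entry_diffOn {n : ℕ} {F : ℂ → Matrix (Fin n) (Fin n) ℂ} {s : Set ℂ}
    (hF : ∀ i j, DifferentiableOn ℂ (fun z => F z i j) s) (i j : Fin n) :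
    DifferentiableOn ℂ (fun z => (F z).adjugate i j) s := by
  simp only [Matrix.adjugate_apply]
  apply det_entry_diffOn
  intro k l
  simp only [Matrix.updateRow_apply]
  by_cases h : k = j
  · simp [h]
  · simpa [h] using hF k l

lemma inv_entry_diffOn {n : ℕ} {F : ℂ → Matrix (Fin n) (Fin n) ℂ} {s : Set ℂ}
    (hF : ∀ i j, DifferentiableOn ℂ (fun z => F z i j) s)
    (hu : ∀ z ∈ s, IsUnit (F z)) (i j : Fin n) :
    DifferentiableOn ℂ (fun z => (F z)⁻¹ i j) s := by
  have h1 : DifferentiableOn ℂ (fun z => ((F z).det)⁻¹ * (F z).adjugate i j) s :=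
    ((det_entry_diffOn hF).inv fun z hz =>
      (((Matrix.isUnit_iff_isUnit_det _).mp (hu z hz))).ne_zero).mul
      (adjugate_entry_diffOn hF i j)
  refine h1.congr fun z hz => ?_
  rw [Matrix.inv_def, Matrix.smul_apply, Ring.inverse_eq_inv', smul_eq_mul]

lemma inv_contOn {n : ℕ} {F : ℂ → Matrix (Fin n) (Fin n) ℂ} {s : Set ℂ}
    (hF : ContinuousOn F s) (hu : ∀ z ∈ s, IsUnit (F z)) :
    ContinuousOn (fun z => (F z)⁻¹) s := by
  have h1 : ContinuousOn (fun z => ((F z).det)⁻¹ • (F z).adjugate) s :=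
    ((Continuous.matrix_det continuous_id).comp_continuousOn hF |>.inv₀ fun z hz =>
      (((Matrix.isUnit_iff_isUnit_det _).mp (hu z hz))).ne_zero).smul
      ((Continuous.matrix_adjugate continuous_id).comp_continuousOn hF)
  refine h1.congr fun z hz => ?_
  rw [Matrix.inv_def, Ring.inverse_eq_inv']

lemma entry_contOn {n : ℕ} {F : ℂ → Matrix (Fin n) (Fin n) ℂ} {s : Set ℂ}
    (hF : ContinuousOn F s) (i j : Fin n) :
    ContinuousOn (fun z => F z i j) s :=
  (continuous_apply j).comp_continuousOn ((continuous_apply i).comp_continuousOn hF)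

lemma diffOn_conj_conj {g : ℂ → ℂ} (hg : DifferentiableOn ℂ g (ball 0 1)) :
    DifferentiableOn ℂ (fun z => (starRingEnd ℂ) (g ((starRingEnd ℂ) z))) (ball 0 1) := by
  intro z₀ hz₀
  have hz₀' : (starRingEnd ℂ) z₀ ∈ ball (0:ℂ) 1 := conj_mem_ball hz₀
  have hga : DifferentiableAt ℂ g ((starRingEnd ℂ) z₀) :=
    (hg _ hz₀').differentiableAt (isOpen_ball.mem_nhds hz₀')
  set d := deriv g ((starRingEnd ℂ) z₀) with hdd
  have hd := hga.hasDerivAt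
  rw [hasDerivAt_iff_isLittleO] at hd
  have hc : Filter.Tendsto (fun z : ℂ => (starRingEnd ℂ) z) (nhds z₀)
      (nhds ((starRingEnd ℂ) z₀)) := Complex.continuous_conj.tendsto z₀
  have h2 := hd.comp_tendsto hc
  have H : HasDerivAt (fun z => (starRingEnd ℂ) (g ((starRingEnd ℂ) z)))
      ((starRingEnd ℂ) d) z₀ := by
    rw [hasDerivAt_iff_isLittleO]
    refine IsLittleO.of_norm_norm (h2.norm_norm.congr (fun z => ?_) (fun z => ?_))
    · rw [← RCLike.norm_conj]
      congr 1
      simp only [Function.comp_apply, smul_eq_mul, map_sub, _root_.map_mul, Complex.conj_conj,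
        hdd]
    · rw [← RCLike.norm_conj]
      congr 1
      simp only [Function.comp_apply, map_sub, Complex.conj_conj]
  exact H.differentiableAt.differentiableWithinAt

lemma im_eq_zero_of_boundary {t : ℂ → ℂ} (ht : DiffContOnCl ℂ t (ball 0 1))
    (hb : ∀ z ∈ sphere (0:ℂ) 1, (t z).im = 0) :
    ∀ z ∈ closedBall (0:ℂ) 1, (t z).im = 0 := by
  have hfr : frontier (ball (0:ℂ) 1) = sphere 0 1 := frontier_ball 0 one_ne_zero
  have hcl : closure (ball (0:ℂ) 1) = closedBall 0 1 := closure_ball 0 one_ne_zero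
  intro z hz
  have key : ∀ ε : ℂ, ε.im = 0 → ((ε * I * t z).re ≤ 0 ∨ True) → True := fun _ _ _ => trivial
  have main : ∀ ε : ℝ, (∀ w ∈ sphere (0:ℂ) 1, ((ε:ℂ) * I * t w).re = 0) →
      Real.exp (((ε:ℂ) * I * t z).re) ≤ 1 := by
    intro ε hε
    have gdc : DiffContOnCl ℂ (fun w => Complex.exp ((ε:ℂ) * I * t w)) (ball 0 1) :=
      ⟨(ht.differentiableOn.const_mul _).cexp,
        Complex.continuous_exp.comp_continuousOn (continuousOn_const.mul ht.continuousOn)⟩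
    have hle : ‖Complex.exp ((ε:ℂ) * I * t z)‖ ≤ 1 := by
      refine Complex.norm_le_of_forall_mem_frontier_norm_le isBounded_ball gdc ?_ (hcl ▸ hz)
      intro w hw
      rw [hfr] at hw
      rw [Complex.norm_exp, hε w hw, Real.exp_zero]
    rwa [Complex.norm_exp] at hle
  have h1 := main 1 (fun w hw => by
    simp [Complex.mul_re, Complex.mul_im, hb w hw])
  have h2 := main (-1) (fun w hw => by
    simp [Complex.mul_re, Complex.mul_im, hb w hw])
  have e1 : (((1:ℝ):ℂ) * I * t z).re = -(t z).im := by
    simp [Complex.mul_re, Complex.mul_im]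
  have e2 : (((-1:ℝ):ℂ) * I * t z).re = (t z).im := by
    simp [Complex.mul_re, Complex.mul_im]
  rw [e1, Real.exp_le_one_iff] at h1
  rw [e2, Real.exp_le_one_iff] at h2
  linarith

lemma reflect_eq {p s : ℂ → ℂ} (hp : DiffContOnCl ℂ p (ball 0 1))
    (hs : DiffContOnCl ℂ s (ball 0 1))
    (hb : ∀ z ∈ sphere (0:ℂ) 1, p z = (starRingEnd ℂ) (s z)) :
    ∀ z ∈ closedBall (0:ℂ) 1, p z = (starRingEnd ℂ) (s z) := by
  have t1 : DiffContOnCl ℂ (fun z => p z + s z) (ball 0 1) :=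
    ⟨hp.differentiableOn.add hs.differentiableOn, hp.continuousOn.add hs.continuousOn⟩
  have t2 : DiffContOnCl ℂ (fun z => I * (p z - s z)) (ball 0 1) :=
    ⟨(hp.differentiableOn.sub hs.differentiableOn).const_mul _,
      continuousOn_const.mul (hp.continuousOn.sub hs.continuousOn)⟩
  have h1 := im_eq_zero_of_boundary t1 (fun z hz => by
    rw [hb z hz]; simp)
  have h2 := im_eq_zero_of_boundary t2 (fun z hz => by
    rw [hb z hz]; simp [Complex.mul_im, Complex.sub_re, Complex.sub_im])
  intro z hz
  have a1 := h1 z hz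
  have a2 := h2 z hz
  simp only [Complex.add_im] at a1
  simp only [Complex.mul_im, Complex.I_re, Complex.I_im, Complex.sub_re, Complex.sub_im,
    zero_mul, one_mul, zero_add] at a2
  apply Complex.ext
  · simpa using by linarith
  · simpa using by linarith

/-- A canonical (right) factorization `f = f₋ f₊` of a nonsingular matrix function on the
unit circle.  The factor `f₊` extends continuously and invertibly to the closed unit disk,
analytically on the open disk; the factor `f₋` extends continuously and invertibly to the
closed exterior disk including `∞`.  We encode the exterior extension `f₋ᵉ` via the map
`Fm : 𝔻² → GLₙ(ℂ)`, `Fm w = f₋ᵉ(w⁻¹)` (so `Fm 0 = f₋ᵉ(∞)`), which is continuous on the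
closed unit disk, analytic on the open disk, and invertible-valued. -/
structure CanonicalFactorization (n : ℕ) (f : ℂ → Matrix (Fin n) (Fin n) ℂ) : Type where
  Fm : ℂ → Matrix (Fin n) (Fin n) ℂ
  Fp : ℂ → Matrix (Fin n) (Fin n) ℂ
  contOn_m : ContinuousOn Fm (closedBall 0 1)
  contOn_p : ContinuousOn Fp (closedBall 0 1)
  anal_m : ∀ i j, DifferentiableOn ℂ (fun z => Fm z i j) (ball 0 1)
  anal_p : ∀ i j, DifferentiableOn ℂ (fun z => Fp z i j) (ball 0 1)
  unit_m : ∀ z ∈ closedBall (0 : ℂ) 1, IsUnit (Fm z)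
  unit_p : ∀ z ∈ closedBall (0 : ℂ) 1, IsUnit (Fp z)
  factor : ∀ z ∈ sphere (0 : ℂ) 1, f z = Fm z⁻¹ * Fp z


section Main
variable {n : ℕ} {f : ℂ → Matrix (Fin n) (Fin n) ℂ}

lemma factorization_unique (c c' : CanonicalFactorization n f) :
    ∀ z ∈ closedBall (0:ℂ) 1,
      c.Fm ((starRingEnd ℂ) z) * c.Fp z = c'.Fm ((starRingEnd ℂ) z) * c'.Fp z := by
  set G : ℂ → Matrix (Fin n) (Fin n) ℂ := fun w => (c'.Fm w)⁻¹ * c.Fm w with hG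
  set H : ℂ → Matrix (Fin n) (Fin n) ℂ := fun z => c'.Fp z * (c.Fp z)⁻¹ with hH
  have ballsub : ball (0:ℂ) 1 ⊆ closedBall 0 1 := ball_subset_closedBall
  have hum' : ∀ z ∈ ball (0:ℂ) 1, IsUnit (c'.Fm z) := fun z hz => c'.unit_m z (ballsub hz)
  have hup : ∀ z ∈ ball (0:ℂ) 1, IsUnit (c.Fp z) := fun z hz => c.unit_p z (ballsub hz)
  have hHd : ∀ i j, DifferentiableOn ℂ (fun z => H z i j) (ball 0 1) := by
    intro i j
    have h := DifferentiableOn.fun_sum (u := Finset.univ)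
      (fun k (_ : k ∈ Finset.univ) => (c'.anal_p i k).mul (inv_entry_diffOn c.anal_p hup k j))
    simp only [hH, Matrix.mul_apply]
    exact h
  have hHc : ContinuousOn H (closedBall 0 1) :=
    c'.contOn_p.mul (inv_contOn c.contOn_p c.unit_p)
  have hGd : ∀ i j, DifferentiableOn ℂ (fun z => G z i j) (ball 0 1) := by
    intro i j
    have h := DifferentiableOn.fun_sum (u := Finset.univ)
      (fun k (_ : k ∈ Finset.univ) => (inv_entry_diffOn c'.anal_m hum' i k).mul (c.anal_m k j))
    simp only [hG, Matrix.mul_apply]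
    exact h
  have hGc : ContinuousOn G (closedBall 0 1) :=
    (inv_contOn c'.contOn_m c'.unit_m).mul c.contOn_m
  have bdry : ∀ z ∈ sphere (0:ℂ) 1, G ((starRingEnd ℂ) z) = H z := by
    intro z hz
    have hz1 : ‖z‖ = 1 := mem_sphere_zero_iff_norm.mp hz
    have hinv : z⁻¹ = (starRingEnd ℂ) z := Complex.inv_eq_conj hz1
    have hfe : c.Fm ((starRingEnd ℂ) z) * c.Fp z = c'.Fm ((starRingEnd ℂ) z) * c'.Fp z := by
      have h1 := c.factor z hz; have h2 := c'.factor z hz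
      rw [hinv] at h1 h2; rw [← h1, ← h2]
    have hw : (starRingEnd ℂ) z ∈ closedBall (0:ℂ) 1 :=
      sphere_subset_closedBall (conj_mem_sphere hz)
    have hz' : z ∈ closedBall (0:ℂ) 1 := sphere_subset_closedBall hz
    have uA : IsUnit (c'.Fm ((starRingEnd ℂ) z)).det :=
      (Matrix.isUnit_iff_isUnit_det _).mp (c'.unit_m _ hw)
    have uD : IsUnit (c.Fp z).det := (Matrix.isUnit_iff_isUnit_det _).mp (c.unit_p z hz')
    show (c'.Fm ((starRingEnd ℂ) z))⁻¹ * c.Fm ((starRingEnd ℂ) z) = c'.Fp z * (c.Fp z)⁻¹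
    calc (c'.Fm ((starRingEnd ℂ) z))⁻¹ * c.Fm ((starRingEnd ℂ) z)
        = (c'.Fm ((starRingEnd ℂ) z))⁻¹ *
            ((c.Fm ((starRingEnd ℂ) z) * c.Fp z) * (c.Fp z)⁻¹) := by
          rw [Matrix.mul_assoc (c.Fm ((starRingEnd ℂ) z)), Matrix.mul_nonsing_inv _ uD,
            Matrix.mul_one]
      _ = (c'.Fm ((starRingEnd ℂ) z))⁻¹ *
            ((c'.Fm ((starRingEnd ℂ) z) * c'.Fp z) * (c.Fp z)⁻¹) := by rw [hfe]
      _ = c'.Fp z * (c.Fp z)⁻¹ := by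
          rw [Matrix.mul_assoc (c'.Fm ((starRingEnd ℂ) z)), ← Matrix.mul_assoc
            ((c'.Fm ((starRingEnd ℂ) z))⁻¹), Matrix.nonsing_inv_mul _ uA, Matrix.one_mul]
  have entry : ∀ i j, ∀ z ∈ closedBall (0:ℂ) 1,
      H z i j = (starRingEnd ℂ) ((starRingEnd ℂ) (G ((starRingEnd ℂ) z) i j)) := by
    intro i j
    apply reflect_eq
    · exact ⟨hHd i j, (closure_ball (0:ℂ) one_ne_zero).symm ▸ entry_contOn hHc i j⟩
    · refine ⟨diffOn_conj_conj (hGd i j), ?_⟩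
      rw [closure_ball (0:ℂ) one_ne_zero]
      exact Complex.continuous_conj.comp_continuousOn
        ((entry_contOn hGc i j).comp Complex.continuous_conj.continuousOn
          (fun z hz => conj_mem_closedBall hz))
    · intro z hz
      rw [bdry z hz, Complex.conj_conj]
  have main : ∀ z ∈ closedBall (0:ℂ) 1, G ((starRingEnd ℂ) z) = H z := by
    intro z hz
    ext i j
    have h := entry i j z hz
    rw [Complex.conj_conj] at h
    exact h.symm
  intro z hz
  have hw : (starRingEnd ℂ) z ∈ closedBall (0:ℂ) 1 := conj_mem_closedBall hz
  have uA : IsUnit (c'.Fm ((starRingEnd ℂ) z)).det :=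
    (Matrix.isUnit_iff_isUnit_det _).mp (c'.unit_m _ hw)
  have uD : IsUnit (c.Fp z).det := (Matrix.isUnit_iff_isUnit_det _).mp (c.unit_p z hz)
  have key : (c'.Fm ((starRingEnd ℂ) z))⁻¹ * c.Fm ((starRingEnd ℂ) z)
      = c'.Fp z * (c.Fp z)⁻¹ := main z hz
  calc c.Fm ((starRingEnd ℂ) z) * c.Fp z
      = (c'.Fm ((starRingEnd ℂ) z) *
          ((c'.Fm ((starRingEnd ℂ) z))⁻¹ * c.Fm ((starRingEnd ℂ) z))) * c.Fp z := by
        rw [← Matrix.mul_assoc, Matrix.mul_nonsing_inv _ uA, Matrix.one_mul]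
    _ = (c'.Fm ((starRingEnd ℂ) z) * (c'.Fp z * (c.Fp z)⁻¹)) * c.Fp z := by rw [key]
    _ = c'.Fm ((starRingEnd ℂ) z) * c'.Fp z := by
        rw [Matrix.mul_assoc (c'.Fm ((starRingEnd ℂ) z)), Matrix.mul_assoc (c'.Fp z),
          Matrix.nonsing_inv_mul _ uD, Matrix.mul_one]

end Main

/-- Given a canonical factorization `f = f₋ f₊` of `f : 𝕋 → GLₙ(ℂ)`, the function
`fᵉ(z) = f₋ᵉ(z̄⁻¹) · f₊ᵉ(z)` (here `Fm (conj z) = f₋ᵉ(z̄⁻¹)`, including `z = 0` where it is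
`f₋ᵉ(∞) f₊ᵉ(0)`) is a continuous extension of `f` to the closed unit disk, takes invertible
values, and is independent of the choice of canonical factorization. -/
theorem extension_well_defined {n : ℕ} (f : ℂ → Matrix (Fin n) (Fin n) ℂ)
    (c : CanonicalFactorization n f) :
    ContinuousOn (fun z => c.Fm (starRingEnd ℂ z) * c.Fp z) (closedBall 0 1) ∧
    (∀ z ∈ sphere (0 : ℂ) 1, c.Fm (starRingEnd ℂ z) * c.Fp z = f z) ∧
    (∀ z ∈ closedBall (0 : ℂ) 1, IsUnit (c.Fm (starRingEnd ℂ z) * c.Fp z)) ∧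
    (∀ c' : CanonicalFactorization n f, ∀ z ∈ closedBall (0 : ℂ) 1,
      c.Fm (starRingEnd ℂ z) * c.Fp z = c'.Fm (starRingEnd ℂ z) * c'.Fp z) := by
  refine ⟨?_, ?_, ?_, ?_⟩
  · exact (c.contOn_m.comp Complex.continuous_conj.continuousOn
      (fun z hz => conj_mem_closedBall hz)).mul c.contOn_p
  · intro z hz
    have hz1 : ‖z‖ = 1 := mem_sphere_zero_iff_norm.mp hz
    rw [c.factor z hz, Complex.inv_eq_conj hz1]
  · intro z hz
    exact (c.unit_m _ (conj_mem_closedBall hz)).mul (c.unit_p z hz)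
  · exact fun c' => factorization_unique c c'
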